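/- Let each party have d outcomes and m inputs. A two-party behaviour p lies in the convex hull of the classical deterministic behaviours — i.e., the behaviours with p(a,b|x,y) = 1 iff a = α and b = β; or p(a,b|x,y) = 1 iff a = α and b = β_x; or p(a,b|x,y) = 1 iff a = α_y and b = β, where α, β ∈ Fin d, (β_x)_{x ∈ Fin m} and (α_y)_{y ∈ Fin m} are arbitrary families in Fin d — if and only if p satisfies positivity, normalisation, the NBTS conditions, and the classicality equalities p(a,b|x,y) + p(a,b|x',y') = p(a,b|x,y') + p(a,b|x',y) for all a,b,x,x',y,y'. -/

import Mathlib

open Finset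

private lemma sum_fn_prod {m d : ℕ} (h : Fin m → Fin d → ℝ) :
    ∑ B : Fin m → Fin d, ∏ x, h x (B x) = ∏ x, ∑ c, h x c := by
  rw [← Finset.sum_prod_piFinset univ h, Fintype.piFinset_univ]

private lemma sum_fn_prod_ite {m d : ℕ} (h : Fin m → Fin d → ℝ) (x : Fin m) (b : Fin d) :
    ∑ B : Fin m → Fin d, (if B x = b then ∏ x', h x' (B x') else 0)
      = h x b * ∏ x' ∈ univ.erase x, ∑ c, h x' c := by
  have hrw : ∀ B : Fin m → Fin d,
      (if B x = b then ∏ x', h x' (B x') else 0)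
        = ∏ x', (fun x' c => if x' = x then (if c = b then h x' c else 0) else h x' c) x' (B x') := by
    intro B
    by_cases hB : B x = b
    · rw [if_pos hB]
      rw [← Finset.prod_erase_mul univ (fun x' => h x' (B x')) (mem_univ x),
          ← Finset.prod_erase_mul univ _ (mem_univ x)]
      congr 1
      · exact (Finset.prod_congr rfl fun x' hx' => by
          simp only [if_neg (Finset.ne_of_mem_erase hx')]).symm
      · simp [hB]
    · rw [if_neg hB]
      symm
      apply Finset.prod_eq_zero (mem_univ x)
      simp [hB]
  rw [Finset.sum_congr rfl fun B _ => hrw B, sum_fn_prod (fun x' c => if x' = x then (if c = b then h x' c else 0) else h x' c)]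
  rw [← Finset.prod_erase_mul univ _ (mem_univ x)]
  have h1 : ∑ c, (fun (x' : Fin m) (c : Fin d) => if x' = x then (if c = b then h x' c else 0) else h x' c) x c = h x b := by
    simp
  have h2 : ∀ x' ∈ univ.erase x, (∑ c, (fun (x' : Fin m) (c : Fin d) => if x' = x then (if c = b then h x' c else 0) else h x' c) x' c) = ∑ c, h x' c := by
    intro x' hx'
    simp [if_neg (Finset.ne_of_mem_erase hx')]
  rw [h1, Finset.prod_congr rfl h2, mul_comm]

/-- The "single-α with x-dependent β" part: summing the weighted mixture gives `f a b x`. -/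
private lemma mixture_eval {m d : ℕ} (f : Fin d → Fin d → Fin m → ℝ) (F : Fin d → ℝ)
    (hf : ∀ a b x, 0 ≤ f a b x) (hF : ∀ a x, ∑ b, f a b x = F a)
    (a b : Fin d) (x : Fin m) :
    ∑ t : Fin d × (Fin m → Fin d),
      (F t.1 * ∏ x', (f t.1 (t.2 x') x' / F t.1)) * (if a = t.1 ∧ b = t.2 x then 1 else 0)
      = f a b x := by
  rw [Fintype.sum_prod_type]
  rw [Finset.sum_eq_single a]
  · by_cases hFa : F a = 0
    · have hfz : ∀ b x, f a b x = 0 := by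
        intro b x
        have h0 : ∑ b, f a b x = 0 := by rw [hF a x, hFa]
        exact (Finset.sum_eq_zero_iff_of_nonneg (fun c _ => hf a c x)).mp h0 b (mem_univ b)
      rw [hfz]
      apply Finset.sum_eq_zero
      intro B _
      rw [hFa]
      simp
    · have key : ∀ B : Fin m → Fin d,
          (F a * ∏ x', (f a (B x') x' / F a)) * (if a = a ∧ b = B x then 1 else 0)
            = F a * (if B x = b then ∏ x', (f a (B x') x' / F a) else 0) := by
        intro B
        by_cases hb : B x = b
        · simp [hb]
        · rw [if_neg hb, if_neg]
          · ring
          · rintro ⟨-, rfl⟩; exact hb rfl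
      rw [Finset.sum_congr rfl fun B _ => key B, ← Finset.mul_sum,
        sum_fn_prod_ite (fun x' c => f a c x' / F a) x b]
      have hone : ∀ x' ∈ univ.erase x, (∑ c, f a c x' / F a) = 1 := by
        intro x' _
        rw [← Finset.sum_div, hF a x', div_self hFa]
      rw [Finset.prod_congr rfl hone, Finset.prod_const_one, mul_one, mul_div_cancel₀ _ hFa]
  · intro α _ hα
    apply Finset.sum_eq_zero
    intro B _
    rw [if_neg]
    · ring
    · rintro ⟨rfl, -⟩; exact hα rfl
  · intro h; exact absurd (mem_univ a) h

/-- sum of mixture weights equals F. -/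
private lemma mixture_weight_sum {m d : ℕ} (f : Fin d → Fin d → Fin m → ℝ) (F : Fin d → ℝ)
    (hF : ∀ a x, ∑ b, f a b x = F a) (α : Fin d) :
    ∑ B : Fin m → Fin d, F α * ∏ x', (f α (B x') x' / F α) = F α := by
  by_cases hFa : F α = 0
  · rw [hFa]; simp
  · rw [← Finset.mul_sum, sum_fn_prod (fun x' c => f α c x' / F α)]
    have hone : ∀ x' ∈ (univ : Finset (Fin m)), (∑ c, f α c x' / F α) = 1 := by
      intro x' _
      rw [← Finset.sum_div, hF α x', div_self hFa]
    rw [Finset.prod_congr rfl hone, Finset.prod_const_one, mul_one]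

private lemma mixture_eval' {m d : ℕ} (g : Fin d → Fin d → Fin m → ℝ) (G : Fin d → ℝ)
    (hg : ∀ a b y, 0 ≤ g a b y) (hG : ∀ b y, ∑ a, g a b y = G b)
    (a b : Fin d) (y : Fin m) :
    ∑ t : (Fin m → Fin d) × Fin d,
      (G t.2 * ∏ y', (g (t.1 y') t.2 y' / G t.2)) * (if a = t.1 y ∧ b = t.2 then 1 else 0)
      = g a b y := by
  have h := mixture_eval (fun u v w => g v u w) G (fun u v w => hg v u w) hG b a y
  rw [← h]
  rw [← Fintype.sum_equiv (Equiv.prodComm (Fin m → Fin d) (Fin d))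
    (fun t : (Fin m → Fin d) × Fin d =>
      (G t.2 * ∏ y', (g (t.1 y') t.2 y' / G t.2)) * (if a = t.1 y ∧ b = t.2 then 1 else 0))
    (fun t : Fin d × (Fin m → Fin d) =>
      (G t.1 * ∏ x', (g (t.2 x') t.1 x' / G t.1)) * (if b = t.1 ∧ a = t.2 y then 1 else 0))
    (fun t => by
      dsimp only [Equiv.prodComm_apply, Prod.fst_swap, Prod.snd_swap]
      exact congrArg _ (if_congr and_comm rfl rfl))]

private lemma const_eval {d m : ℕ} (c' : Fin d → Fin d → ℝ) (a b : Fin d) :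
    ∑ t : Fin d × Fin d, c' t.1 t.2 * (if a = t.1 ∧ b = t.2 then (1:ℝ) else 0) = c' a b := by
  rw [Fintype.sum_prod_type]
  simp [ite_and, mul_ite]

/-- For two parties with `d` outcomes and `m` inputs each, a behaviour
lies in the convex hull of the classical deterministic behaviours iff it satisfies
positivity, normalisation, the NBTS conditions, and the classicality equalities. -/
theorem mem_convexHull_classical_deterministic_iff (d m : ℕ)
    (hd : 0 < d) (hm : 0 < m)
    (p : Fin d → Fin d → Fin m → Fin m → ℝ) :
    p ∈ convexHull ℝ
      ({p : Fin d → Fin d → Fin m → Fin m → ℝ |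
          (∃ α β : Fin d, p = fun a b _ _ =>
              if a = α ∧ b = β then (1 : ℝ) else 0) ∨
          (∃ (α : Fin d) (βx : Fin m → Fin d), p = fun a b x _ =>
              if a = α ∧ b = βx x then (1 : ℝ) else 0) ∨
          (∃ (αy : Fin m → Fin d) (β : Fin d), p = fun a b _ y =>
              if a = αy y ∧ b = β then (1 : ℝ) else 0)})
    ↔
    ((∀ a b x y, 0 ≤ p a b x y) ∧
     (∀ x y, ∑ a, ∑ b, p a b x y = 1) ∧
     (∀ a x x' y, ∑ b, p a b x y = ∑ b, p a b x' y) ∧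
     (∀ b x y y', ∑ a, p a b x y = ∑ a, p a b x y') ∧
     (∀ a b x x' y y',
        p a b x y + p a b x' y' = p a b x y' + p a b x' y)) := by
  classical
  constructor
  · -- forward direction
    intro hp
    have hsub : ({p : Fin d → Fin d → Fin m → Fin m → ℝ |
          (∃ α β : Fin d, p = fun a b _ _ =>
              if a = α ∧ b = β then (1 : ℝ) else 0) ∨
          (∃ (α : Fin d) (βx : Fin m → Fin d), p = fun a b x _ =>
              if a = α ∧ b = βx x then (1 : ℝ) else 0) ∨
          (∃ (αy : Fin m → Fin d) (β : Fin d), p = fun a b _ y =>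
              if a = αy y ∧ b = β then (1 : ℝ) else 0)}) ⊆
        {q : Fin d → Fin d → Fin m → Fin m → ℝ |
          (∀ a b x y, 0 ≤ q a b x y) ∧
          (∀ x y, ∑ a, ∑ b, q a b x y = 1) ∧
          (∀ a x x' y, ∑ b, q a b x y = ∑ b, q a b x' y) ∧
          (∀ b x y y', ∑ a, q a b x y = ∑ a, q a b x y') ∧
          (∀ a b x x' y y',
            q a b x y + q a b x' y' = q a b x y' + q a b x' y)} := by
      rintro q (⟨α, β, rfl⟩ | ⟨α, βx, rfl⟩ | ⟨αy, β, rfl⟩)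
      · refine ⟨?_, ?_, ?_, ?_, ?_⟩
        · intro a b x y; dsimp only; split <;> norm_num
        · intro x y; simp [ite_and]
        · intro a x x' y; simp [ite_and]
        · intro b x y y'; rfl
        · intro a b x x' y y'; rfl
      · refine ⟨?_, ?_, ?_, ?_, ?_⟩
        · intro a b x y; dsimp only; split <;> norm_num
        · intro x y; simp [ite_and]
        · intro a x x' y; simp [ite_and]
        · intro b x y y'; rfl
        · intro a b x x' y y'; rfl
      · refine ⟨?_, ?_, ?_, ?_, ?_⟩
        · intro a b x y; dsimp only; split <;> norm_num
        · intro x y; simp [ite_and]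
        · intro a x x' y; rfl
        · intro b x y y'; simp [ite_and]
        · intro a b x x' y y'; exact add_comm _ _
    have hconv : Convex ℝ
        {q : Fin d → Fin d → Fin m → Fin m → ℝ |
          (∀ a b x y, 0 ≤ q a b x y) ∧
          (∀ x y, ∑ a, ∑ b, q a b x y = 1) ∧
          (∀ a x x' y, ∑ b, q a b x y = ∑ b, q a b x' y) ∧
          (∀ b x y y', ∑ a, q a b x y = ∑ a, q a b x y') ∧
          (∀ a b x x' y y',
            q a b x y + q a b x' y' = q a b x y' + q a b x' y)} := by
      rintro q1 ⟨h1a, h1b, h1c, h1d, h1e⟩ q2 ⟨h2a, h2b, h2c, h2d, h2e⟩ u v hu hv huv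
      have e : ∀ a b x y, (u • q1 + v • q2) a b x y = u * q1 a b x y + v * q2 a b x y :=
        fun _ _ _ _ => rfl
      refine ⟨?_, ?_, ?_, ?_, ?_⟩
      · intro a b x y
        rw [e]
        exact add_nonneg (mul_nonneg hu (h1a a b x y)) (mul_nonneg hv (h2a a b x y))
      · intro x y
        simp only [e, Finset.sum_add_distrib, ← Finset.mul_sum, h1b x y, h2b x y]
        linarith
      · intro a x x' y
        simp only [e, Finset.sum_add_distrib, ← Finset.mul_sum, h1c a x x' y, h2c a x x' y]
      · intro b x y y'
        simp only [e, Finset.sum_add_distrib, ← Finset.mul_sum, h1d b x y y', h2d b x y y']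
      · intro a b x x' y y'
        simp only [e]
        rw [show u * q1 a b x y + v * q2 a b x y + (u * q1 a b x' y' + v * q2 a b x' y')
            = u * (q1 a b x y + q1 a b x' y') + v * (q2 a b x y + q2 a b x' y') by ring,
          h1e a b x x' y y', h2e a b x x' y y']
        ring
    exact convexHull_min hsub hconv hp
  · intro ⟨hpos, hnorm, hA, hB, hcl⟩
    have hmFin : Nonempty (Fin m) := ⟨⟨0, hm⟩⟩
    -- decomposition p = c' + f + g
    obtain ⟨c', f, g, hc, hf, hg, hdec⟩ :
        ∃ (c' : Fin d → Fin d → ℝ) (f g : Fin d → Fin d → Fin m → ℝ),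
          (∀ a b, 0 ≤ c' a b) ∧ (∀ a b x, 0 ≤ f a b x) ∧ (∀ a b y, 0 ≤ g a b y) ∧
          (∀ a b x y, p a b x y = c' a b + f a b x + g a b y) := by
      have hmin : ∀ a b : Fin d, ∃ xy : Fin m × Fin m, ∀ x y, p a b xy.1 xy.2 ≤ p a b x y := by
        intro a b
        obtain ⟨xy, -, hxy⟩ := Finset.exists_min_image (univ : Finset (Fin m × Fin m))
          (fun t => p a b t.1 t.2) univ_nonempty
        exact ⟨xy, fun x y => hxy (x, y) (mem_univ _)⟩
      choose XY hXY using hmin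
      refine ⟨fun a b => p a b (XY a b).1 (XY a b).2,
        fun a b x => p a b x (XY a b).2 - p a b (XY a b).1 (XY a b).2,
        fun a b y => p a b (XY a b).1 y - p a b (XY a b).1 (XY a b).2, ?_, ?_, ?_, ?_⟩
      · intro a b; exact hpos a b _ _
      · intro a b x; have := hXY a b x (XY a b).2; dsimp only; linarith
      · intro a b y; have := hXY a b (XY a b).1 y; dsimp only; linarith
      · intro a b x y
        have := hcl a b x (XY a b).1 y (XY a b).2
        dsimp only
        linarith
    set x0 : Fin m := ⟨0, hm⟩ with hx0
    obtain ⟨F, hFx⟩ : ∃ F : Fin d → ℝ, ∀ a x, ∑ b, f a b x = F a := by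
      refine ⟨fun a => ∑ b, f a b x0, fun a x => ?_⟩
      have e1 := hA a x x0 x0
      have e2 : ∀ x', ∑ b, p a b x' x0 = (∑ b, c' a b) + (∑ b, f a b x') + ∑ b, g a b x0 := by
        intro x'
        rw [show (∑ b, p a b x' x0) = ∑ b, (c' a b + f a b x' + g a b x0) from
          Finset.sum_congr rfl fun b _ => hdec a b x' x0,
          Finset.sum_add_distrib, Finset.sum_add_distrib]
      rw [e2 x, e2 x0] at e1
      dsimp only
      linarith
    obtain ⟨G, hGy⟩ : ∃ G : Fin d → ℝ, ∀ b y, ∑ a, g a b y = G b := by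
      refine ⟨fun b => ∑ a, g a b x0, fun b y => ?_⟩
      have e1 := hB b x0 y x0
      have e2 : ∀ y', ∑ a, p a b x0 y' = (∑ a, c' a b) + (∑ a, f a b x0) + ∑ a, g a b y' := by
        intro y'
        rw [show (∑ a, p a b x0 y') = ∑ a, (c' a b + f a b x0 + g a b y') from
          Finset.sum_congr rfl fun a _ => hdec a b x0 y',
          Finset.sum_add_distrib, Finset.sum_add_distrib]
      rw [e2 y, e2 x0] at e1
      dsimp only
      linarith
    have hFpos : ∀ a, 0 ≤ F a := fun a =>
      (hFx a x0) ▸ Finset.sum_nonneg fun b _ => hf a b x0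
    have hGpos : ∀ b, 0 ≤ G b := fun b =>
      (hGy b x0) ▸ Finset.sum_nonneg fun a _ => hg a b x0
    -- total weight
    have htot : (∑ t : Fin d × Fin d, c' t.1 t.2) + (∑ a, F a) + (∑ b, G b) = 1 := by
      have h1 := hnorm x0 x0
      have e : ∀ a, ∑ b, p a b x0 x0 = (∑ b, c' a b) + F a + ∑ b, g a b x0 := by
        intro a
        rw [show (∑ b, p a b x0 x0) = ∑ b, (c' a b + f a b x0 + g a b x0) from
          Finset.sum_congr rfl fun b _ => hdec a b x0 x0,
          Finset.sum_add_distrib, Finset.sum_add_distrib, hFx a x0]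
      rw [Finset.sum_congr rfl fun a _ => e a, Finset.sum_add_distrib,
        Finset.sum_add_distrib] at h1
      rw [Fintype.sum_prod_type]
      have hgg : ∑ a, ∑ b, g a b x0 = ∑ b, G b := by
        rw [Finset.sum_comm]
        exact Finset.sum_congr rfl fun b _ => hGy b x0
      rw [hgg] at h1
      exact h1
    -- the convex decomposition
    have hw0 : ∀ i ∈ (univ : Finset ((Fin d × Fin d) ⊕ ((Fin d × (Fin m → Fin d)) ⊕ ((Fin m → Fin d) × Fin d)))),
        0 ≤ (Sum.elim (fun t => c' t.1 t.2)
          (Sum.elim (fun t => F t.1 * ∏ x', (f t.1 (t.2 x') x' / F t.1))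
            (fun t => G t.2 * ∏ y', (g (t.1 y') t.2 y' / G t.2)))) i := by
      rintro (⟨α, β⟩ | ⟨α, B⟩ | ⟨A, β⟩) -
      · exact hc α β
      · exact mul_nonneg (hFpos α) (Finset.prod_nonneg fun x' _ =>
          div_nonneg (hf α (B x') x') (hFpos α))
      · exact mul_nonneg (hGpos β) (Finset.prod_nonneg fun y' _ =>
          div_nonneg (hg (A y') β y') (hGpos β))
    have hwsum : ∑ i : (Fin d × Fin d) ⊕ ((Fin d × (Fin m → Fin d)) ⊕ ((Fin m → Fin d) × Fin d)),
        (Sum.elim (fun t => c' t.1 t.2)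
          (Sum.elim (fun t => F t.1 * ∏ x', (f t.1 (t.2 x') x' / F t.1))
            (fun t => G t.2 * ∏ y', (g (t.1 y') t.2 y' / G t.2)))) i = 1 := by
      rw [Fintype.sum_sum_type, Fintype.sum_sum_type]
      simp only [Sum.elim_inl, Sum.elim_inr]
      have h2 : ∑ t : Fin d × (Fin m → Fin d), F t.1 * ∏ x', (f t.1 (t.2 x') x' / F t.1)
          = ∑ a, F a := by
        rw [Fintype.sum_prod_type]
        exact Finset.sum_congr rfl fun α _ => mixture_weight_sum f F hFx α
      have h3 : ∑ t : (Fin m → Fin d) × Fin d, G t.2 * ∏ y', (g (t.1 y') t.2 y' / G t.2)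
          = ∑ b, G b := by
        rw [Fintype.sum_prod_type, Finset.sum_comm]
        exact Finset.sum_congr rfl fun β _ =>
          mixture_weight_sum (fun u v w => g v u w) G hGy β
      rw [h2, h3, ← htot]
      ring
    have hzmem : ∀ i ∈ (univ : Finset ((Fin d × Fin d) ⊕ ((Fin d × (Fin m → Fin d)) ⊕ ((Fin m → Fin d) × Fin d)))),
        (Sum.elim (fun t => fun a b (_ : Fin m) (_ : Fin m) => if a = t.1 ∧ b = t.2 then (1:ℝ) else 0)
          (Sum.elim (fun t => fun a b x (_ : Fin m) => if a = t.1 ∧ b = t.2 x then (1:ℝ) else 0)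
            (fun t => fun a b (_ : Fin m) y => if a = t.1 y ∧ b = t.2 then (1:ℝ) else 0))) i ∈
        ({p : Fin d → Fin d → Fin m → Fin m → ℝ |
          (∃ α β : Fin d, p = fun a b _ _ =>
              if a = α ∧ b = β then (1 : ℝ) else 0) ∨
          (∃ (α : Fin d) (βx : Fin m → Fin d), p = fun a b x _ =>
              if a = α ∧ b = βx x then (1 : ℝ) else 0) ∨
          (∃ (αy : Fin m → Fin d) (β : Fin d), p = fun a b _ y =>
              if a = αy y ∧ b = β then (1 : ℝ) else 0)}) := by
      rintro (⟨α, β⟩ | ⟨α, B⟩ | ⟨A, β⟩) -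
      · exact Or.inl ⟨α, β, rfl⟩
      · exact Or.inr (Or.inl ⟨α, B, rfl⟩)
      · exact Or.inr (Or.inr ⟨A, β, rfl⟩)
    have hmem := Finset.centerMass_mem_convexHull
      (univ : Finset ((Fin d × Fin d) ⊕ ((Fin d × (Fin m → Fin d)) ⊕ ((Fin m → Fin d) × Fin d))))
      hw0 (by rw [hwsum]; norm_num) hzmem
    rw [Finset.centerMass_eq_of_sum_1 _ _ hwsum] at hmem
    have heval : ∑ i : (Fin d × Fin d) ⊕ ((Fin d × (Fin m → Fin d)) ⊕ ((Fin m → Fin d) × Fin d)),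
        (Sum.elim (fun t => c' t.1 t.2)
          (Sum.elim (fun t => F t.1 * ∏ x', (f t.1 (t.2 x') x' / F t.1))
            (fun t => G t.2 * ∏ y', (g (t.1 y') t.2 y' / G t.2)))) i •
        (Sum.elim (fun t => fun a b (_ : Fin m) (_ : Fin m) => if a = t.1 ∧ b = t.2 then (1:ℝ) else 0)
          (Sum.elim (fun t => fun a b x (_ : Fin m) => if a = t.1 ∧ b = t.2 x then (1:ℝ) else 0)
            (fun t => fun a b (_ : Fin m) y => if a = t.1 y ∧ b = t.2 then (1:ℝ) else 0))) i = p := by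
      funext a b x y
      simp only [Finset.sum_apply, Pi.smul_apply, smul_eq_mul]
      rw [Fintype.sum_sum_type, Fintype.sum_sum_type]
      simp only [Sum.elim_inl, Sum.elim_inr]
      rw [const_eval (m := m) c' a b, mixture_eval f F hf hFx a b x, mixture_eval' g G hg hGy a b y]
      rw [hdec a b x y]; ring
    rwa [heval] at hmem
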